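/- Let (B_t)_{t>0} be a real-valued centered Gaussian process, i.e., every finite family (B_{s₁},…,B_{s_k}) is a centered Gaussian random vector, with covariance E[B_s B_t] = min(s,t) for all s, t > 0. Let (t_n)_{n∈ℕ} be a deterministic sequence of positive reals with lim_{n→∞} t_n = 0. Then, almost surely, liminf_{n→∞} B_{t_n}/√{t_n} = −∞, and likewise limsup_{n→∞} B_{t_n}/√{t_n} = +∞. -/

import Mathlib

open MeasureTheory Real Filter
open scoped NNReal ENNReal

lemma exp_gaussianReal (v : ℝ≥0) :
    Integrable (fun x => Real.exp x) (ProbabilityTheory.gaussianReal 0 v) ∧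
    ∫ x, Real.exp x ∂(ProbabilityTheory.gaussianReal 0 v) = Real.exp (v / 2) := by
  by_cases hv : v = 0
  · subst hv
    rw [ProbabilityTheory.gaussianReal_zero_var]
    constructor
    · refine ⟨Continuous.aestronglyMeasurable (by continuity), ?_⟩
      simp only [HasFiniteIntegral]
      rw [lintegral_dirac' _ (by fun_prop)]
      exact ENNReal.coe_lt_top
    · rw [integral_dirac]
      norm_num
  · have hv0 : (0:ℝ) < (v:ℝ) := by positivity
    have hvne : (v:ℝ) ≠ 0 := ne_of_gt hv0
    have hkey : ∀ x : ℝ, (ProbabilityTheory.gaussianPDFReal 0 v x) * Real.exp x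
        = Real.exp (v/2) * ProbabilityTheory.gaussianPDFReal (v:ℝ) v x := by
      intro x
      unfold ProbabilityTheory.gaussianPDFReal
      rw [mul_assoc, ← Real.exp_add, mul_left_comm, ← Real.exp_add]
      congr 2
      field_simp
      ring
    rw [ProbabilityTheory.gaussianReal_of_var_ne_zero _ hv]
    have hmeq : (ProbabilityTheory.gaussianPDF 0 v)
        = fun x => ((fun y => (ProbabilityTheory.gaussianPDFReal 0 v y).toNNReal) x : ℝ≥0∞) := by
      rfl
    rw [hmeq]
    have hmeas : Measurable fun y => (ProbabilityTheory.gaussianPDFReal 0 v y).toNNReal :=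
      (ProbabilityTheory.measurable_gaussianPDFReal 0 v).real_toNNReal
    have hsmul : ∀ x : ℝ, ((ProbabilityTheory.gaussianPDFReal 0 v x).toNNReal : ℝ≥0) • Real.exp x
        = Real.exp (v/2) * ProbabilityTheory.gaussianPDFReal (v:ℝ) v x := by
      intro x
      rw [NNReal.smul_def, Real.coe_toNNReal _ (ProbabilityTheory.gaussianPDFReal_nonneg _ _ _)]
      exact hkey x
    constructor
    · rw [integrable_withDensity_iff_integrable_smul hmeas]
      refine Integrable.congr ((ProbabilityTheory.integrable_gaussianPDFReal (v:ℝ) v).const_mul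
        (Real.exp (v/2))) ?_
      exact Filter.Eventually.of_forall fun x => (hsmul x).symm
    · rw [integral_withDensity_eq_integral_smul hmeas]
      rw [integral_congr_ae (Filter.Eventually.of_forall hsmul)]
      rw [integral_const_mul, ProbabilityTheory.integral_gaussianPDFReal_eq_one _ hv, mul_one]

lemma exp_map_gaussian {Ω : Type*} [MeasurableSpace Ω] {P : Measure Ω} [IsProbabilityMeasure P]
    {W : Ω → ℝ} (hW : Measurable W) {v : ℝ≥0}
    (h : Measure.map W P = ProbabilityTheory.gaussianReal 0 v) :
    Integrable (fun ω => Real.exp (W ω)) P ∧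
      ∫ ω, Real.exp (W ω) ∂P = Real.exp (v / 2) := by
  have h1 : Integrable (fun x => Real.exp x) (Measure.map W P) := by
    rw [h]; exact (exp_gaussianReal v).1
  constructor
  · exact (integrable_map_measure (Continuous.aestronglyMeasurable (by continuity))
      hW.aemeasurable).mp h1
  · rw [← integral_map hW.aemeasurable (Continuous.aestronglyMeasurable (by continuity)), h,
      (exp_gaussianReal v).2]

lemma term_bound {b X c p : ℝ} (hX : 0 < X) (hc : 0 ≤ c) (hp0 : 0 ≤ p) (hp1 : p ≤ 1) :
    b * (X * Real.exp (c * p)) ≤ b * X + |b| * c * (X * Real.exp c) * p := by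
  have hE1 : 1 ≤ Real.exp (c * p) := by
    rw [← Real.exp_zero]
    exact Real.exp_le_exp.mpr (by positivity)
  have hEc : Real.exp (c * p) ≤ Real.exp c := Real.exp_le_exp.mpr (by nlinarith)
  have hkey : Real.exp (c * p) - 1 ≤ c * p * Real.exp (c * p) := by
    have h2 := Real.add_one_le_exp (-(c * p))
    have h3 : Real.exp (-(c * p)) * Real.exp (c * p) = 1 := by
      rw [← Real.exp_add]; simp
    nlinarith [Real.exp_pos (c * p)]
  have h4 : Real.exp (c * p) - 1 ≤ c * p * Real.exp c := by
    nlinarith [mul_nonneg hc hp0]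
  have h5 : b * (X * Real.exp (c * p)) - b * X = (b * X) * (Real.exp (c * p) - 1) := by ring
  have h6 : (b * X) * (Real.exp (c * p) - 1) ≤ (|b| * X) * (Real.exp (c * p) - 1) := by
    apply mul_le_mul_of_nonneg_right _ (by linarith)
    exact mul_le_mul_of_nonneg_right (le_abs_self b) hX.le
  have h7 : (|b| * X) * (Real.exp (c * p) - 1) ≤ (|b| * X) * (c * p * Real.exp c) :=
    mul_le_mul_of_nonneg_left h4 (by positivity)
  nlinarith

lemma geo_sum_left (b : ℕ) : ∀ a : ℕ, ∑ k ∈ Finset.Ico a b, ((2:ℝ)⁻¹) ^ (b - k) ≤ 1 := by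
  induction b with
  | zero => intro a; simp
  | succ b ih =>
    intro a
    by_cases hab : a ≤ b
    · rw [Finset.sum_Ico_succ_top hab]
      have h1 : ∀ k ∈ Finset.Ico a b, ((2:ℝ)⁻¹) ^ (b + 1 - k) = (2:ℝ)⁻¹ * ((2:ℝ)⁻¹) ^ (b - k) := by
        intro k hk
        rw [Finset.mem_Ico] at hk
        rw [show b + 1 - k = (b - k) + 1 by omega, pow_succ]
        ring
      rw [Finset.sum_congr rfl h1, ← Finset.mul_sum]
      rw [show b + 1 - b = 1 by omega, pow_one]
      nlinarith [ih a]
    · rw [Finset.Ico_eq_empty (by omega)]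
      simp

lemma geo_sum_right (a b : ℕ) : ∑ k ∈ Finset.Ico a b, ((2:ℝ)⁻¹) ^ (k - a) ≤ 2 := by
  rw [Finset.sum_Ico_eq_sum_range]
  have h1 : ∀ i ∈ Finset.range (b - a), ((2:ℝ)⁻¹) ^ (a + i - a) = (1/(2:ℝ)) ^ i := by
    intro i _
    rw [show a + i - a = i by omega]
    norm_num
  rw [Finset.sum_congr rfl h1]
  exact sum_geometric_two_le _

noncomputable def bmA (M : ℝ) : ℝ := Real.exp ((M+1)^2/2) * (Real.exp (3/2) - 1)

noncomputable def bmB (M : ℝ) : ℝ :=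
  Real.exp (2*(M+1)^2) - 2*Real.exp ((2*M+3)^2/2 - M) + Real.exp (2*(M+2)^2 - 2*M)

noncomputable def bmS (M : ℝ) : ℝ := bmA M / bmB M

noncomputable def bmγ (M : ℝ) : Fin 5 → ℝ := ![M+1, M+2, 2*M+2, 2*M+3, 2*M+4]

noncomputable def bmβ (M : ℝ) : Fin 5 → ℝ :=
  ![-(2*bmS M), 2*bmS M*Real.exp (-M), -(bmS M)^2, 2*(bmS M)^2*Real.exp (-M),
    -((bmS M)^2*(Real.exp (-M))^2)]

noncomputable def bmh (M : ℝ) (x : ℝ) : ℝ := ∑ i, bmβ M i * Real.exp (bmγ M i * x)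

noncomputable def bmδ (M : ℝ) : ℝ := ∑ i, bmβ M i * Real.exp ((bmγ M i)^2/2)

noncomputable def bmQ (M : ℝ) (p : ℝ) : ℝ :=
  ∑ i, ∑ l, bmβ M i * bmβ M l *
    Real.exp (((bmγ M i)^2 + (bmγ M l)^2 + 2*(bmγ M i)*(bmγ M l)*p)/2)

noncomputable def bmK (M : ℝ) : ℝ :=
  ∑ i, ∑ l, |bmβ M i * bmβ M l| * ((bmγ M i)*(bmγ M l)) *
    Real.exp (((bmγ M i)^2 + (bmγ M l)^2)/2 + (bmγ M i)*(bmγ M l))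

lemma bmA_pos (M : ℝ) : 0 < bmA M := by
  have h1 : (1:ℝ) < Real.exp (3/2) := Real.one_lt_exp_iff.mpr (by norm_num)
  have h2 : (0:ℝ) < Real.exp ((M+1)^2/2) := Real.exp_pos _
  unfold bmA; nlinarith

lemma bmB_pos (M : ℝ) : 0 < bmB M := by
  set u := Real.exp (2*(M+1)^2) with hu
  set w := Real.exp (2*(M+2)^2 - 2*M) with hw
  set Pm := Real.exp ((M+1)^2 + (M+2)^2 - M) with hPm
  have hPuw : Pm^2 = u * w := by
    rw [hPm, hu, hw, sq, ← Real.exp_add, ← Real.exp_add]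
    rw [show (M+1)^2 + (M+2)^2 - M + ((M+1)^2 + (M+2)^2 - M) = 2*(M+1)^2 + (2*(M+2)^2 - 2*M) by ring, Real.exp_add]
  have hmid : Real.exp ((2*M+3)^2/2 - M) = Pm * Real.exp (-(1:ℝ)/2) := by
    rw [hPm, ← Real.exp_add]
    rw [show (M+1)^2 + (M+2)^2 - M + (-(1:ℝ)/2) = (2*M+3)^2/2 - M by ring]
  have hupos : 0 < u := Real.exp_pos _
  have hwpos : 0 < w := Real.exp_pos _
  have hPpos : 0 < Pm := Real.exp_pos _
  have hgm : 2 * Pm ≤ u + w := by nlinarith [sq_nonneg (u - w), sq_nonneg (u + w - 2*Pm)]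
  have hlt : Real.exp (-(1:ℝ)/2) < 1 := Real.exp_lt_one_iff.mpr (by norm_num)
  unfold bmB
  rw [hmid]
  nlinarith

lemma bmS_pos (M : ℝ) : 0 < bmS M := div_pos (bmA_pos M) (bmB_pos M)

lemma bmγ_pos (M : ℝ) (hM : 0 ≤ M) : ∀ i, 0 < bmγ M i := by
  intro i
  fin_cases i <;> simp [bmγ] <;> linarith

lemma bmh_form (M x : ℝ) :
    bmh M x = 1 - (1 + bmS M * (Real.exp ((M+1)*x) - Real.exp ((M+2)*x - M)))^2 := by
  have J1 : Real.exp ((2*M+2)*x) = Real.exp ((M+1)*x) * Real.exp ((M+1)*x) := by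
    rw [show (2*M+2)*x = (M+1)*x + (M+1)*x by ring, Real.exp_add]
  have J2 : Real.exp ((2*M+3)*x) = Real.exp ((M+1)*x) * Real.exp ((M+2)*x) := by
    rw [show (2*M+3)*x = (M+1)*x + (M+2)*x by ring, Real.exp_add]
  have J3 : Real.exp ((2*M+4)*x) = Real.exp ((M+2)*x) * Real.exp ((M+2)*x) := by
    rw [show (2*M+4)*x = (M+2)*x + (M+2)*x by ring, Real.exp_add]
  have J4 : Real.exp ((M+2)*x - M) = Real.exp ((M+2)*x) * Real.exp (-M) := by
    rw [show (M+2)*x - M = (M+2)*x + -M by ring, Real.exp_add]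
  simp only [bmh, bmβ, bmγ, Fin.sum_univ_five, Matrix.cons_val_zero, Matrix.cons_val_one,
    Matrix.head_cons, Matrix.cons_val_two, Matrix.tail_cons, Matrix.cons_val_three,
    Matrix.cons_val_four]
  rw [J1, J2, J3, J4]
  ring

lemma bmh_nonpos (M x : ℝ) (hx : x ≤ M) : bmh M x ≤ 0 := by
  have hr : 0 ≤ Real.exp ((M+1)*x) - Real.exp ((M+2)*x - M) := by
    rw [sub_nonneg]
    exact Real.exp_le_exp.mpr (by linarith)
  have hσ := bmS_pos M
  rw [bmh_form]
  nlinarith [mul_nonneg hσ.le hr]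

lemma bmδ_eq (M : ℝ) : bmδ M = bmA M ^ 2 / bmB M := by
  have I1 : Real.exp (-M) * Real.exp ((M+2)^2/2) = Real.exp ((M+1)^2/2) * Real.exp (3/2) := by
    rw [← Real.exp_add, ← Real.exp_add]
    norm_num
    ring_nf
  have I2 : Real.exp ((2*M+2)^2/2) = Real.exp (2*(M+1)^2) := by
    rw [show (2*M+2)^2/2 = 2*(M+1)^2 by ring]
  have I3 : Real.exp (-M) * Real.exp ((2*M+3)^2/2) = Real.exp ((2*M+3)^2/2 - M) := by
    rw [← Real.exp_add]
    rw [show -M + (2*M+3)^2/2 = (2*M+3)^2/2 - M by ring]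
  have I4 : Real.exp (-M)^2 * Real.exp ((2*M+4)^2/2) = Real.exp (2*(M+2)^2 - 2*M) := by
    rw [sq, mul_assoc, ← Real.exp_add, ← Real.exp_add]
    rw [show -M + (-M + (2*M+4)^2/2) = 2*(M+2)^2 - 2*M by ring]
  have hform : bmδ M = 2*bmS M*bmA M - (bmS M)^2*bmB M := by
    simp only [bmδ, bmβ, bmγ, Fin.sum_univ_five, Matrix.cons_val_zero, Matrix.cons_val_one,
      Matrix.head_cons, Matrix.cons_val_two, Matrix.tail_cons, Matrix.cons_val_three,
      Matrix.cons_val_four, bmA, bmB]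
    linear_combination (2*bmS M) * I1 - (bmS M)^2 * I2 + 2*(bmS M)^2 * I3 - (bmS M)^2 * I4
  rw [hform, bmS]
  have hB := bmB_pos M
  field_simp
  ring

lemma bmδ_pos (M : ℝ) : 0 < bmδ M := by
  rw [bmδ_eq]
  exact div_pos (pow_pos (bmA_pos M) 2) (bmB_pos M)

lemma bmK_nonneg (M : ℝ) (hM : 0 ≤ M) : 0 ≤ bmK M := by
  unfold bmK
  refine Finset.sum_nonneg fun i _ => Finset.sum_nonneg fun l _ => ?_
  have h1 := bmγ_pos M hM i
  have h2 := bmγ_pos M hM l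
  positivity

lemma bmQ_zero (M : ℝ) : bmQ M 0 = (bmδ M)^2 := by
  rw [sq, bmδ, Finset.sum_mul_sum]
  refine Finset.sum_congr rfl fun i _ => Finset.sum_congr rfl fun l _ => ?_
  rw [show ((bmγ M i)^2 + (bmγ M l)^2 + 2*(bmγ M i)*(bmγ M l)*0)/2
      = (bmγ M i)^2/2 + (bmγ M l)^2/2 by ring, Real.exp_add]
  ring

lemma bmQ_le (M : ℝ) (hM : 0 ≤ M) (p : ℝ) (hp0 : 0 ≤ p) (hp1 : p ≤ 1) :
    bmQ M p ≤ (bmδ M)^2 + bmK M * p := by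
  rw [← bmQ_zero, bmQ, bmQ, bmK, Finset.sum_mul, ← Finset.sum_add_distrib]
  refine Finset.sum_le_sum fun i _ => ?_
  rw [Finset.sum_mul, ← Finset.sum_add_distrib]
  refine Finset.sum_le_sum fun l _ => ?_
  have hγi := bmγ_pos M hM i
  have hγl := bmγ_pos M hM l
  have e1 : ((bmγ M i)^2 + (bmγ M l)^2 + 2*(bmγ M i)*(bmγ M l)*p)/2
      = ((bmγ M i)^2 + (bmγ M l)^2)/2 + ((bmγ M i)*(bmγ M l))*p := by ring
  have e2 : ((bmγ M i)^2 + (bmγ M l)^2 + 2*(bmγ M i)*(bmγ M l)*0)/2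
      = ((bmγ M i)^2 + (bmγ M l)^2)/2 := by ring
  have e3 : ((bmγ M i)^2 + (bmγ M l)^2)/2 + (bmγ M i)*(bmγ M l)
      = ((bmγ M i)^2 + (bmγ M l)^2)/2 + ((bmγ M i)*(bmγ M l)) := by ring
  rw [e1, e2, e3, Real.exp_add, Real.exp_add]
  exact term_bound (Real.exp_pos _) (by positivity) hp0 hp1

lemma core {Ω : Type*} [MeasurableSpace Ω] (P : Measure Ω) [IsProbabilityMeasure P]
    (Y : ℕ → Ω → ℝ) (hY : ∀ k, Measurable (Y k)) (ρ : ℕ → ℕ → ℝ)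
    (hρ0 : ∀ j k, 0 ≤ ρ j k) (hρ1 : ∀ j k, ρ j k ≤ 1)
    (hρs : ∀ j k, ρ j k = ρ k j)
    (hρd : ∀ j k, j < k → ρ j k ≤ ((2:ℝ)⁻¹) ^ (k - j))
    (hlaw : ∀ (a b : ℝ) (j k : ℕ), Measure.map (fun ω => a * Y j ω + b * Y k ω) P =
      ProbabilityTheory.gaussianReal 0 (a^2 + b^2 + 2*a*b*ρ j k).toNNReal)
    (M : ℝ) (hM : 0 ≤ M) :
    ∀ᵐ ω ∂P, ∃ᶠ k in Filter.atTop, M < Y k ω := by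
  classical
  have E2 : ∀ (a b : ℝ) (j k : ℕ),
      Integrable (fun ω => Real.exp (a * Y j ω) * Real.exp (b * Y k ω)) P ∧
      ∫ ω, Real.exp (a * Y j ω) * Real.exp (b * Y k ω) ∂P
        = Real.exp ((a^2 + b^2 + 2*a*b*ρ j k)/2) := by
    intro a b j k
    have hW : Measurable (fun ω => a * Y j ω + b * Y k ω) :=
      ((hY j).const_mul a).add ((hY k).const_mul b)
    have hv0 : 0 ≤ a^2 + b^2 + 2*a*b*ρ j k := by
      nlinarith [hρ0 j k, hρ1 j k, sq_nonneg (a+b), sq_nonneg (a-b)]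
    have hres := exp_map_gaussian hW (hlaw a b j k)
    have hcoe : (((a^2 + b^2 + 2*a*b*ρ j k).toNNReal : ℝ)) = a^2 + b^2 + 2*a*b*ρ j k :=
      Real.coe_toNNReal _ hv0
    rw [hcoe] at hres
    have heq : (fun ω => Real.exp (a * Y j ω) * Real.exp (b * Y k ω))
        = fun ω => Real.exp (a * Y j ω + b * Y k ω) := by
      funext ω; rw [← Real.exp_add]
    rw [heq]
    exact hres
  have E1 : ∀ (a : ℝ) (k : ℕ), Integrable (fun ω => Real.exp (a * Y k ω)) P ∧
      ∫ ω, Real.exp (a * Y k ω) ∂P = Real.exp (a^2/2) := by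
    intro a k
    have h := E2 a 0 k k
    simp only [zero_mul, Real.exp_zero, mul_one] at h
    rw [show a^2/2 = (a^2 + 0^2 + 2*a*0*ρ k k)/2 by ring]
    exact h
  have Eh : ∀ k : ℕ, Integrable (fun ω => bmh M (Y k ω)) P ∧
      ∫ ω, bmh M (Y k ω) ∂P = bmδ M := by
    intro k
    have hint : ∀ i : Fin 5, Integrable (fun ω => bmβ M i * Real.exp (bmγ M i * Y k ω)) P :=
      fun i => ((E1 (bmγ M i) k).1).const_mul _
    have hfe : (fun ω => bmh M (Y k ω))
        = fun ω => ∑ i, bmβ M i * Real.exp (bmγ M i * Y k ω) := rfl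
    constructor
    · rw [hfe]; exact integrable_finset_sum _ (fun i _ => hint i)
    · rw [hfe, integral_finset_sum _ (fun i _ => hint i)]
      refine Finset.sum_congr rfl fun i _ => ?_
      rw [integral_const_mul, (E1 _ k).2]
  have Ehh : ∀ j k : ℕ, Integrable (fun ω => bmh M (Y j ω) * bmh M (Y k ω)) P ∧
      ∫ ω, bmh M (Y j ω) * bmh M (Y k ω) ∂P = bmQ M (ρ j k) := by
    intro j k
    have hexp : (fun ω => bmh M (Y j ω) * bmh M (Y k ω))
        = fun ω => ∑ i, ∑ l, (bmβ M i * bmβ M l) *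
            (Real.exp (bmγ M i * Y j ω) * Real.exp (bmγ M l * Y k ω)) := by
      funext ω
      show (∑ i, bmβ M i * Real.exp (bmγ M i * Y j ω)) *
          (∑ l, bmβ M l * Real.exp (bmγ M l * Y k ω)) = _
      rw [Finset.sum_mul_sum]
      exact Finset.sum_congr rfl fun i _ => Finset.sum_congr rfl fun l _ => by ring
    have hint : ∀ (i l : Fin 5), Integrable (fun ω => (bmβ M i * bmβ M l) *
        (Real.exp (bmγ M i * Y j ω) * Real.exp (bmγ M l * Y k ω))) P :=
      fun i l => ((E2 _ _ j k).1).const_mul _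
    constructor
    · rw [hexp]
      exact integrable_finset_sum _ (fun i _ => integrable_finset_sum _ (fun l _ => hint i l))
    · rw [hexp, integral_finset_sum _ (fun i _ => integrable_finset_sum _ (fun l _ => hint i l))]
      refine Finset.sum_congr rfl fun i _ => ?_
      rw [integral_finset_sum _ (fun l _ => hint i l)]
      refine Finset.sum_congr rfl fun l _ => ?_
      rw [integral_const_mul, (E2 _ _ j k).2]
  have hδ := bmδ_pos M
  have hK0 := bmK_nonneg M hM
  have hKc : ∀ Kc : ℕ, P {ω | ∀ k, Kc ≤ k → Y k ω ≤ M} = 0 := by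
    intro Kc
    set G := {ω | ∀ k, Kc ≤ k → Y k ω ≤ M} with hG
    have hbound : ∀ n : ℕ, 1 ≤ n → (P G).toReal ≤ (3 * bmK M / (bmδ M)^2) / n := by
      intro n hn
      set F := Finset.Ico Kc (Kc + n) with hF
      have hcard : F.card = n := by rw [hF, Nat.card_Ico]; omega
      set T : Ω → ℝ := fun ω => ∑ k ∈ F, bmh M (Y k ω) with hT
      have hTint : Integrable T P := integrable_finset_sum _ (fun k _ => (Eh k).1)
      have hTval : ∫ ω, T ω ∂P = n * bmδ M := by
        rw [hT, integral_finset_sum _ (fun k _ => (Eh k).1),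
          Finset.sum_congr rfl (fun k _ => (Eh k).2), Finset.sum_const, hcard, nsmul_eq_mul]
      have hT2 : (fun ω => T ω ^ 2)
          = fun ω => ∑ j ∈ F, ∑ k ∈ F, bmh M (Y j ω) * bmh M (Y k ω) := by
        funext ω; rw [sq, hT, Finset.sum_mul_sum]
      have hT2int : Integrable (fun ω => T ω ^ 2) P := by
        rw [hT2]
        exact integrable_finset_sum _
          (fun j _ => integrable_finset_sum _ (fun k _ => (Ehh j k).1))
      have hρsum : ∑ j ∈ F, ∑ k ∈ F, ρ j k ≤ 3 * n := by
        have hone : ∀ j ∈ F, ∑ k ∈ F, ρ j k ≤ 3 := by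
          intro j hj
          rw [Finset.mem_Ico] at hj
          rw [← Finset.sum_filter_add_sum_filter_not F (fun k => k < j) (ρ j)]
          have s1 : ∑ k ∈ F.filter (fun k => k < j), ρ j k ≤ 1 := by
            refine le_trans (Finset.sum_le_sum (g := fun k => ((2:ℝ)⁻¹) ^ (j - k)) ?_) ?_
            · intro k hk
              rw [Finset.mem_filter] at hk
              rw [hρs j k]
              exact hρd k j hk.2
            · refine le_trans (Finset.sum_le_sum_of_subset_of_nonneg ?_ ?_) (geo_sum_left j Kc)
              · intro k hk
                rw [Finset.mem_filter, hF, Finset.mem_Ico] at hk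
                rw [Finset.mem_Ico]
                exact ⟨hk.1.1, hk.2⟩
              · intro k _ _; positivity
          have s2 : ∑ k ∈ F.filter (fun k => ¬ k < j), ρ j k ≤ 2 := by
            refine le_trans (Finset.sum_le_sum (g := fun k => ((2:ℝ)⁻¹) ^ (k - j)) ?_) ?_
            · intro k hk
              rw [Finset.mem_filter, not_lt] at hk
              rcases eq_or_lt_of_le hk.2 with heq | hlt
              · rw [← heq]
                simpa using hρ1 j j
              · exact hρd j k hlt
            · refine le_trans (Finset.sum_le_sum_of_subset_of_nonneg ?_ ?_) (geo_sum_right j (Kc+n))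
              · intro k hk
                rw [Finset.mem_filter, hF, Finset.mem_Ico, not_lt] at hk
                rw [Finset.mem_Ico]
                exact ⟨hk.2, hk.1.2⟩
              · intro k _ _; positivity
          linarith
        calc ∑ j ∈ F, ∑ k ∈ F, ρ j k ≤ ∑ j ∈ F, (3:ℝ) := Finset.sum_le_sum hone
          _ = 3 * n := by rw [Finset.sum_const, hcard, nsmul_eq_mul]; ring
      have hT2val : ∫ ω, T ω ^ 2 ∂P ≤ (n:ℝ)^2 * (bmδ M)^2 + 3 * bmK M * n := by
        rw [hT2, integral_finset_sum _
          (fun j _ => integrable_finset_sum _ (fun k _ => (Ehh j k).1))]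
        have : ∀ j ∈ F, ∫ ω, ∑ k ∈ F, bmh M (Y j ω) * bmh M (Y k ω) ∂P
            = ∑ k ∈ F, bmQ M (ρ j k) := by
          intro j _
          rw [integral_finset_sum _ (fun k _ => (Ehh j k).1)]
          exact Finset.sum_congr rfl fun k _ => (Ehh j k).2
        rw [Finset.sum_congr rfl this]
        have hQb : ∀ j ∈ F, ∀ k ∈ F, bmQ M (ρ j k) ≤ (bmδ M)^2 + bmK M * ρ j k :=
          fun j _ k _ => bmQ_le M hM _ (hρ0 j k) (hρ1 j k)
        calc ∑ j ∈ F, ∑ k ∈ F, bmQ M (ρ j k)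
            ≤ ∑ j ∈ F, ∑ k ∈ F, ((bmδ M)^2 + bmK M * ρ j k) :=
              Finset.sum_le_sum fun j hj => Finset.sum_le_sum fun k hk => hQb j hj k hk
          _ = (n:ℝ)^2 * (bmδ M)^2 + bmK M * (∑ j ∈ F, ∑ k ∈ F, ρ j k) := by
              simp only [Finset.sum_add_distrib, Finset.sum_const, hcard, nsmul_eq_mul,
                ← Finset.mul_sum]
              ring
          _ ≤ (n:ℝ)^2 * (bmδ M)^2 + 3 * bmK M * n := by
              nlinarith [mul_le_mul_of_nonneg_left hρsum hK0]
      set c : ℝ := n * bmδ M with hc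
      have hcpos : 0 < c := by
        rw [hc]
        have : (0:ℝ) < n := by exact_mod_cast hn
        positivity
      have i1 : Integrable (fun ω => T ω^2 - (2*c) * T ω) P :=
        hT2int.sub (hTint.const_mul (2*c))
      have hsqint : Integrable (fun ω => (T ω - c)^2) P := by
        have : (fun ω => (T ω - c)^2) = fun ω => T ω^2 - (2*c) * T ω + c^2 := by
          funext ω; ring
        rw [this]
        exact i1.add (integrable_const _)
      have hsqval : ∫ ω, (T ω - c)^2 ∂P ≤ 3 * bmK M * n := by
        have hfe : (fun ω => (T ω - c)^2) = fun ω => T ω^2 - (2*c) * T ω + c^2 := by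
          funext ω; ring
        rw [hfe, integral_add i1 (integrable_const _),
          integral_sub hT2int (hTint.const_mul (2*c)), integral_const_mul, hTval,
          integral_const]
        simp only [measure_univ, ENNReal.toReal_one, probReal_univ, smul_eq_mul, one_mul]
        have : 2 * c * (n * bmδ M) = 2 * c^2 := by rw [hc]; ring
        rw [this]
        have hc2 : c^2 = (n:ℝ)^2 * (bmδ M)^2 := by rw [hc]; ring
        nlinarith [hT2val]
      have hmark := mul_meas_ge_le_integral_of_nonneg
        (Filter.Eventually.of_forall (fun ω => sq_nonneg (T ω - c))) hsqint (c^2)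
      have hsub : G ⊆ {ω | c^2 ≤ (T ω - c)^2} := by
        intro ω hω
        have hTle : T ω ≤ 0 := by
          rw [hT]
          refine Finset.sum_nonpos fun k hk => ?_
          rw [hF, Finset.mem_Ico] at hk
          exact bmh_nonpos M _ (hω k hk.1)
        show c^2 ≤ (T ω - c)^2
        nlinarith
      have hPle : (P G).toReal ≤ (P {ω | c^2 ≤ (T ω - c)^2}).toReal :=
        ENNReal.toReal_mono (measure_ne_top _ _) (measure_mono hsub)
      have hfinal : c^2 * (P G).toReal ≤ 3 * bmK M * n := by
        calc c^2 * (P G).toReal ≤ c^2 * (P {ω | c^2 ≤ (T ω - c)^2}).toReal := by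
              exact mul_le_mul_of_nonneg_left hPle (sq_nonneg c)
          _ ≤ ∫ ω, (T ω - c)^2 ∂P := hmark
          _ ≤ 3 * bmK M * n := hsqval
      have hn' : (0:ℝ) < n := by exact_mod_cast hn
      rw [hc] at hfinal
      rw [div_div, le_div_iff₀ (by positivity)]
      calc (P G).toReal * ((bmδ M)^2 * n) = (n * bmδ M)^2 * (P G).toReal / n := by
            field_simp
        _ ≤ 3 * bmK M * n / n := by
            gcongr
        _ = 3 * bmK M := by field_simp
    have h0 : (P G).toReal ≤ 0 := by
      have htend := tendsto_const_div_atTop_nhds_zero_nat (3 * bmK M / (bmδ M)^2)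
      exact ge_of_tendsto htend (Filter.eventually_atTop.mpr ⟨1, hbound⟩)
    have h1 : (P G).toReal = 0 := le_antisymm h0 ENNReal.toReal_nonneg
    exact ((ENNReal.toReal_eq_zero_iff _).mp h1).resolve_right (measure_ne_top P G)
  rw [MeasureTheory.ae_iff]
  refine measure_mono_null ?_ (measure_iUnion_null fun Kc => hKc Kc)
  intro ω hω
  simp only [Set.mem_setOf_eq, Filter.not_frequently, Filter.eventually_atTop] at hω
  obtain ⟨a, ha⟩ := hω
  exact Set.mem_iUnion.2 ⟨a, fun k hk => not_lt.mp (ha k hk)⟩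

lemma exists_subseq (t : ℕ → ℝ) (ht : ∀ n, 0 < t n)
    (hlim : Filter.Tendsto t Filter.atTop (nhds 0)) :
    ∃ idx : ℕ → ℕ, StrictMono idx ∧ ∀ k, t (idx (k+1)) ≤ t (idx k) / 4 := by
  have hsub : ∀ m : ℕ, ∃ N, m < N ∧ t N ≤ t m / 4 := by
    intro m
    have h4 : 0 < t m / 4 := by have := ht m; positivity
    have h1 : ∀ᶠ k in Filter.atTop, t k < t m / 4 := hlim.eventually (gt_mem_nhds h4)
    have h2 : ∀ᶠ k in Filter.atTop, m < k := Filter.eventually_gt_atTop m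
    obtain ⟨N, hN1, hN2⟩ := (h1.and h2).exists
    exact ⟨N, hN2, hN1.le⟩
  choose f hf1 hf2 using hsub
  refine ⟨fun k => Nat.rec 0 (fun _ p => f p) k, strictMono_nat_of_lt_succ fun k => ?_,
    fun k => ?_⟩
  · exact hf1 _
  · exact hf2 _

/- STATEMENT 8: If `(B_t)_{t>0}` has the (centered Gaussian) finite-dimensional
distributions of Brownian motion, and `t_n ↓ 0` is a deterministic sequence of
positive reals, then almost surely
`liminf_n B_{t_n}/√t_n = -∞` and `limsup_n B_{t_n}/√t_n = +∞`. -/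
theorem stmt_8 {Ω : Type*} [MeasurableSpace Ω] (P : Measure Ω) [IsProbabilityMeasure P]
    (B : ℝ → Ω → ℝ) (hmeas : ∀ t, Measurable (B t))
    (hgauss : ∀ (k : ℕ) (s : Fin k → ℝ) (c : Fin k → ℝ), (∀ i, 0 < s i) →
      Measure.map (fun ω => ∑ i, c i * B (s i) ω) P =
        ProbabilityTheory.gaussianReal 0
          (∑ i, ∑ j, c i * c j * min (s i) (s j)).toNNReal)
    (t : ℕ → ℝ) (ht : ∀ n, 0 < t n) (hlim : Filter.Tendsto t Filter.atTop (nhds 0)) :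
    ∀ᵐ ω ∂P,
      Filter.liminf (fun n => ((B (t n) ω / Real.sqrt (t n) : ℝ) : EReal)) Filter.atTop = ⊥ ∧
      Filter.limsup (fun n => ((B (t n) ω / Real.sqrt (t n) : ℝ) : EReal)) Filter.atTop = ⊤ := by
  classical
  obtain ⟨idx, hmono_idx, hquarter⟩ := exists_subseq t ht hlim
  set s : ℕ → ℝ := fun k => t (idx k) with hs
  have spos : ∀ k, 0 < s k := fun k => ht _
  have hdec : ∀ j d, s (j + d) ≤ (4:ℝ)⁻¹ ^ d * s j := by
    intro j d
    induction d with
    | zero => simp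
    | succ d ih =>
      have h1 : s (j + (d+1)) ≤ s (j + d) / 4 := hquarter (j + d)
      have h2 : s (j + d) / 4 ≤ ((4:ℝ)⁻¹ ^ d * s j) / 4 := by linarith
      calc s (j + (d+1)) ≤ ((4:ℝ)⁻¹ ^ d * s j) / 4 := le_trans h1 h2
        _ = (4:ℝ)⁻¹ ^ (d+1) * s j := by rw [pow_succ]; ring
  have hmono_s : ∀ j k, j ≤ k → s k ≤ s j := by
    intro j k hjk
    have h1 := hdec j (k - j)
    rw [show j + (k - j) = k by omega] at h1
    have h2 : (4:ℝ)⁻¹ ^ (k - j) ≤ 1 := pow_le_one₀ (by norm_num) (by norm_num)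
    nlinarith [spos j]
  set Y : ℕ → Ω → ℝ := fun k ω => B (s k) ω / Real.sqrt (s k) with hY
  have hYmeas : ∀ k, Measurable (Y k) := fun k => (hmeas _).div_const _
  set ρ : ℕ → ℕ → ℝ := fun j k => min (s j) (s k) / Real.sqrt (s j * s k) with hρ
  have hρ0 : ∀ j k, 0 ≤ ρ j k := by
    intro j k
    exact div_nonneg (le_min (spos j).le (spos k).le) (Real.sqrt_nonneg _)
  have hρ1 : ∀ j k, ρ j k ≤ 1 := by
    intro j k
    simp only [hρ]
    rw [div_le_one (Real.sqrt_pos.2 (mul_pos (spos j) (spos k)))]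
    refine (Real.le_sqrt (le_min (spos j).le (spos k).le) (mul_pos (spos j) (spos k)).le).mpr ?_
    nlinarith [min_le_left (s j) (s k), min_le_right (s j) (s k), spos j, spos k,
      le_min (spos j).le (spos k).le]
  have hρs : ∀ j k, ρ j k = ρ k j := by
    intro j k; simp only [hρ, min_comm (s j) (s k), mul_comm (s j) (s k)]
  have hρd : ∀ j k, j < k → ρ j k ≤ ((2:ℝ)⁻¹) ^ (k - j) := by
    intro j k hjk
    have hsk : s k ≤ s j := hmono_s j k hjk.le
    have hq4 : s k ≤ (4:ℝ)⁻¹ ^ (k - j) * s j := by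
      have h1 := hdec j (k - j)
      rwa [show j + (k - j) = k by omega] at h1
    have hρeq : ρ j k = Real.sqrt (s k) / Real.sqrt (s j) := by
      simp only [hρ]
      have hm : min (s j) (s k) = s k := min_eq_right hsk
      rw [hm, Real.sqrt_mul (spos j).le]
      rw [show s k = Real.sqrt (s k) * Real.sqrt (s k) from (Real.mul_self_sqrt (spos k).le).symm]
      have hqk : Real.sqrt (s k) ≠ 0 := ne_of_gt (Real.sqrt_pos.2 (spos k))
      have hqj : Real.sqrt (s j) ≠ 0 := ne_of_gt (Real.sqrt_pos.2 (spos j))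
      field_simp
      ring_nf
      simp [Real.sqrt_nonneg]
    rw [hρeq]
    have h4 : (4:ℝ)⁻¹ ^ (k - j) = (((2:ℝ)⁻¹) ^ (k - j))^2 := by
      rw [show ((4:ℝ)⁻¹) = ((2:ℝ)⁻¹)^2 by norm_num, ← pow_mul, mul_comm 2 (k-j), pow_mul]
    calc Real.sqrt (s k) / Real.sqrt (s j) ≤ Real.sqrt ((4:ℝ)⁻¹ ^ (k-j) * s j) / Real.sqrt (s j) := by
          gcongr
      _ = ((2:ℝ)⁻¹) ^ (k - j) := by
          rw [Real.sqrt_mul (by positivity), h4, Real.sqrt_sq (by positivity),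
            mul_div_assoc, div_self (ne_of_gt (Real.sqrt_pos.2 (spos j))), mul_one]
  have hlawY : ∀ (a b : ℝ) (j k : ℕ), Measure.map (fun ω => a * Y j ω + b * Y k ω) P =
      ProbabilityTheory.gaussianReal 0 (a^2 + b^2 + 2*a*b*ρ j k).toNNReal := by
    intro a b j k
    have hsv : ∀ i : Fin 2, 0 < (![s j, s k]) i := by
      intro i; fin_cases i <;> simp [spos j, spos k]
    have hmain := hgauss 2 ![s j, s k] ![a / Real.sqrt (s j), b / Real.sqrt (s k)] hsv
    have hqj : Real.sqrt (s j) ≠ 0 := ne_of_gt (Real.sqrt_pos.2 (spos j))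
    have hqk : Real.sqrt (s k) ≠ 0 := ne_of_gt (Real.sqrt_pos.2 (spos k))
    have hfun : (fun ω => ∑ i, (![a / Real.sqrt (s j), b / Real.sqrt (s k)]) i *
        B ((![s j, s k]) i) ω) = fun ω => a * Y j ω + b * Y k ω := by
      funext ω
      rw [Fin.sum_univ_two]
      simp only [Matrix.cons_val_zero, Matrix.cons_val_one, Matrix.head_cons, hY]
      ring
    have hvar : (∑ i, ∑ l, (![a / Real.sqrt (s j), b / Real.sqrt (s k)]) i *
        (![a / Real.sqrt (s j), b / Real.sqrt (s k)]) l * min ((![s j, s k]) i) ((![s j, s k]) l))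
        = a^2 + b^2 + 2*a*b*ρ j k := by
      rw [Fin.sum_univ_two, Fin.sum_univ_two, Fin.sum_univ_two]
      simp only [Matrix.cons_val_zero, Matrix.cons_val_one, Matrix.head_cons]
      rw [min_self, min_self, min_comm (s k) (s j)]
      simp only [hρ]
      have h1 : Real.sqrt (s j) * Real.sqrt (s j) = s j := Real.mul_self_sqrt (spos j).le
      have h2 : Real.sqrt (s k) * Real.sqrt (s k) = s k := Real.mul_self_sqrt (spos k).le
      have h3 : Real.sqrt (s j * s k) = Real.sqrt (s j) * Real.sqrt (s k) :=
        Real.sqrt_mul (spos j).le _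
      rw [h3]
      have e1 : a / Real.sqrt (s j) * (a / Real.sqrt (s j)) * s j = a^2 := by
        rw [div_mul_div_comm, h1, div_mul_cancel₀ _ (ne_of_gt (spos j))]; ring
      have e2 : b / Real.sqrt (s k) * (b / Real.sqrt (s k)) * s k = b^2 := by
        rw [div_mul_div_comm, h2, div_mul_cancel₀ _ (ne_of_gt (spos k))]; ring
      linear_combination e1 + e2
    rw [hfun, hvar] at hmain
    exact hmain
  have hlawN : ∀ (a b : ℝ) (j k : ℕ),
      Measure.map (fun ω => a * (-(Y j ω)) + b * (-(Y k ω))) P =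
      ProbabilityTheory.gaussianReal 0 (a^2 + b^2 + 2*a*b*ρ j k).toNNReal := by
    intro a b j k
    have h1 := hlawY (-a) (-b) j k
    have hfe : (fun ω => a * (-(Y j ω)) + b * (-(Y k ω)))
        = (fun ω => (-a) * Y j ω + (-b) * Y k ω) := by funext ω; ring
    rw [hfe, h1]
    congr 1
    rw [show (-a)^2 + (-b)^2 + 2*(-a)*(-b)*ρ j k = a^2 + b^2 + 2*a*b*ρ j k by ring]
  have hupper : ∀ M : ℕ, ∀ᵐ ω ∂P, ∃ᶠ k in Filter.atTop, (M:ℝ) < Y k ω :=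
    fun M => core P Y hYmeas ρ hρ0 hρ1 hρs hρd hlawY (M:ℝ) (Nat.cast_nonneg M)
  have hlower : ∀ M : ℕ, ∀ᵐ ω ∂P, ∃ᶠ k in Filter.atTop, (M:ℝ) < -(Y k ω) :=
    fun M => core P (fun k ω => -(Y k ω)) (fun k => (hYmeas k).neg) ρ hρ0 hρ1 hρs hρd hlawN
      (M:ℝ) (Nat.cast_nonneg M)
  have hae := (MeasureTheory.ae_all_iff.2 hupper).and (MeasureTheory.ae_all_iff.2 hlower)
  filter_upwards [hae] with ω hω
  obtain ⟨h1, h2⟩ := hω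
  have hidx_t : Filter.Tendsto idx Filter.atTop Filter.atTop := hmono_idx.tendsto_atTop
  constructor
  · -- liminf = ⊥
    have hle : ∀ M : ℕ,
        Filter.liminf (fun n => ((B (t n) ω / Real.sqrt (t n) : ℝ) : EReal)) Filter.atTop
          ≤ ((-(M:ℝ) : ℝ) : EReal) := by
      intro M
      refine Filter.liminf_le_of_frequently_le' ?_
      have h3 : ∃ᶠ k in Filter.atTop,
          ((B (t (idx k)) ω / Real.sqrt (t (idx k)) : ℝ) : EReal) ≤ ((-(M:ℝ) : ℝ) : EReal) := by
        refine (h2 M).mono fun k hk => ?_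
        have h4 : B (t (idx k)) ω / Real.sqrt (t (idx k)) ≤ -(M:ℝ) := by
          have h5 : (M:ℝ) < -(B (s k) ω / Real.sqrt (s k)) := hk
          have h6 : s k = t (idx k) := rfl
          rw [h6] at h5
          linarith
        exact EReal.coe_le_coe_iff.2 h4
      exact hidx_t.frequently h3
    by_contra hne
    have hbot : (⊥ : EReal) <
        Filter.liminf (fun n => ((B (t n) ω / Real.sqrt (t n) : ℝ) : EReal)) Filter.atTop :=
      Ne.bot_lt hne
    obtain ⟨y, _, hy2⟩ := EReal.exists_between_coe_real hbot
    set M : ℕ := ⌈-y⌉₊ + 1 with hM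
    have h7 : -(M:ℝ) < y := by
      have h8 : -y ≤ (⌈-y⌉₊ : ℝ) := Nat.le_ceil _
      have h9 : (M:ℝ) = (⌈-y⌉₊ : ℝ) + 1 := by rw [hM]; push_cast; ring
      linarith
    have h10 : ((-(M:ℝ) : ℝ) : EReal) < (y : EReal) := EReal.coe_lt_coe_iff.2 h7
    exact absurd ((hle M).trans_lt (h10.trans hy2)) (lt_irrefl _)
  · -- limsup = ⊤
    have hge : ∀ M : ℕ,
        (((M:ℝ) : ℝ) : EReal) ≤
          Filter.limsup (fun n => ((B (t n) ω / Real.sqrt (t n) : ℝ) : EReal)) Filter.atTop := by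
      intro M
      refine Filter.le_limsup_of_frequently_le' ?_
      have h3 : ∃ᶠ k in Filter.atTop,
          (((M:ℝ) : ℝ) : EReal) ≤ ((B (t (idx k)) ω / Real.sqrt (t (idx k)) : ℝ) : EReal) := by
        refine (h1 M).mono fun k hk => ?_
        have h4 : (M:ℝ) ≤ B (t (idx k)) ω / Real.sqrt (t (idx k)) := by
          have h5 : (M:ℝ) < B (s k) ω / Real.sqrt (s k) := hk
          exact h5.le
        exact EReal.coe_le_coe_iff.2 h4
      exact hidx_t.frequently h3
    by_contra hne
    have htop :
        Filter.limsup (fun n => ((B (t n) ω / Real.sqrt (t n) : ℝ) : EReal)) Filter.atTop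
          < (⊤ : EReal) := Ne.lt_top hne
    obtain ⟨y, hy1, _⟩ := EReal.exists_between_coe_real htop
    set M : ℕ := ⌈y⌉₊ with hM
    have h7 : y ≤ (M:ℝ) := Nat.le_ceil _
    have h10 : (y : EReal) ≤ (((M:ℝ) : ℝ) : EReal) := EReal.coe_le_coe_iff.2 h7
    exact absurd (hy1.trans_le (h10.trans (hge M))) (lt_irrefl _)
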